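/- Let μ be a probability measure on ℝ with Lebesgue decomposition μ = c_d μ_d + c_a μ_a + c_s μ_s (discrete, absolutely continuous, continuous singular parts) where c_d > 0, and let f, f_d, f_a, f_s be the corresponding characteristic functions. If μ_d := inf_{t∈ℝ}|f_d(t)| > 0, c_s < c_d·μ_d, and f(t) ≠ 0 for all t ∈ ℝ, then inf_{t∈ℝ}|f(t)| > 0. -/

import Mathlib

open MeasureTheory Filter Real Topology FourierTransform

noncomputable def charFun' (μ : Measure ℝ) (t : ℝ) : ℂ :=
  ∫ x, Complex.exp ((t : ℂ) * (x : ℂ) * Complex.I) ∂μ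

lemma norm_exp_mul_I (t x : ℝ) : ‖Complex.exp ((t : ℂ) * (x : ℂ) * Complex.I)‖ = 1 := by
  rw [Complex.norm_exp]
  simp

lemma charFun'_abs_le_one (μ : Measure ℝ) [IsProbabilityMeasure μ] (t : ℝ) :
    ‖charFun' μ t‖ ≤ 1 := by
  rw [charFun']
  calc ‖∫ x, Complex.exp ((t : ℂ) * (x : ℂ) * Complex.I) ∂μ‖
      ≤ ∫ x, ‖Complex.exp ((t : ℂ) * (x : ℂ) * Complex.I)‖ ∂μ := norm_integral_le_integral_norm _
    _ = 1 := by simp [Complex.norm_exp]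

lemma charFun'_continuous (μ : Measure ℝ) [IsProbabilityMeasure μ] :
    Continuous (charFun' μ) := by
  apply continuous_of_dominated (bound := fun _ => (1 : ℝ))
  · intro t
    exact (Continuous.cexp (by fun_prop)).aestronglyMeasurable
  · intro t
    exact Eventually.of_forall fun x => le_of_eq (norm_exp_mul_I t x)
  · exact integrable_const 1
  · exact Eventually.of_forall fun x => Continuous.cexp (by fun_prop)

lemma charFun'_tendsto_zero (μ : Measure ℝ) [IsFiniteMeasure μ] (hac : μ ≪ volume) :
    Tendsto (charFun' μ) (cocompact ℝ) (𝓝 0) := by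
  set g : ℝ → ℂ := fun v => ((μ.rnDeriv volume v).toReal : ℂ) with hg
  have key : ∀ t : ℝ, charFun' μ t = ∫ v : ℝ, 𝐞 (-(v * (-t / (2 * π)))) • g v := by
    intro t
    rw [charFun', ← MeasureTheory.integral_rnDeriv_smul hac]
    congr 1
    ext v
    rw [Circle.smul_def, Real.fourierChar_apply, hg]
    have : (2 * π * -(v * (-t / (2 * π))) : ℝ) = t * v := by
      field_simp
    rw [this]
    rw [Complex.real_smul, smul_eq_mul]
    show _ = _ * ((((μ.rnDeriv volume v).toReal : ℝ)) : ℂ)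
    push_cast
    ring
  have h1 : Tendsto (fun t : ℝ => -t / (2 * π)) (cocompact ℝ) (cocompact ℝ) := by
    have hne : ((-(2 * π))⁻¹ : ℝ) ≠ 0 := inv_ne_zero (neg_ne_zero.mpr (by positivity))
    have h2 : Tendsto (fun t : ℝ => t * (-(2 * π))⁻¹) (cocompact ℝ) (cocompact ℝ) :=
      (Homeomorph.mulRight₀ ((-(2 * π))⁻¹) hne).map_cocompact.le
    refine h2.congr fun t => ?_
    field_simp
  have h3 := (Real.tendsto_integral_exp_smul_cocompact g).comp h1
  exact (Tendsto.congr (fun t => (key t).symm) h3)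

lemma abs_sub_le_abs_add (a b : ℂ) : ‖a‖ - ‖b‖ ≤ ‖a + b‖ := by
  have h := norm_add_le (a + b) (-b)
  simp only [add_neg_cancel_right, norm_neg] at h
  linarith

theorem stmt11 (μd μa μs : Measure ℝ)
    [IsProbabilityMeasure μd] [IsProbabilityMeasure μa] [IsProbabilityMeasure μs]
    (cd ca cs : ℝ) (hcd : 0 < cd) (hca : 0 ≤ ca) (hcs : 0 ≤ cs)
    (hsum : cd + ca + cs = 1)
    -- μd is discrete
    (hdisc : ∃ s : Set ℝ, s.Countable ∧ μd sᶜ = 0)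
    -- μa is absolutely continuous
    (hac : μa ≪ volume)
    -- μs is continuous singular
    (hsing : μs.MutuallySingular volume) (hcont : ∀ x : ℝ, μs {x} = 0)
    (f : ℝ → ℂ)
    (hf : ∀ t : ℝ, f t = cd * charFun' μd t + ca * charFun' μa t + cs * charFun' μs t)
    (m : ℝ) (hm : 0 < m) (hmd : ∀ t : ℝ, m ≤ ‖charFun' μd t‖)
    (hdom : cs < cd * m)
    (hnz : ∀ t : ℝ, f t ≠ 0) :
    ∃ δ : ℝ, 0 < δ ∧ ∀ t : ℝ, δ ≤ ‖f t‖ := by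
  set ε : ℝ := (cd * m - cs) / 2 with hε
  have hεpos : 0 < ε := by simp [hε]; linarith
  -- lower bound
  have hlow : ∀ t : ℝ, cd * m - cs - ca * ‖charFun' μa t‖ ≤ ‖f t‖ := by
    intro t
    have h1 : ‖cd * charFun' μd t‖ = cd * ‖charFun' μd t‖ := by
      rw [norm_mul]; simp [abs_of_nonneg hcd.le]
    have h2 : ‖ca * charFun' μa t‖ = ca * ‖charFun' μa t‖ := by
      rw [norm_mul]; simp [abs_of_nonneg hca]
    have h3 : ‖cs * charFun' μs t‖ ≤ cs := by
      rw [norm_mul]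
      simp only [Complex.norm_real, Real.norm_eq_abs, abs_of_nonneg hcs]
      calc cs * ‖charFun' μs t‖ ≤ cs * 1 :=
            mul_le_mul_of_nonneg_left (charFun'_abs_le_one μs t) hcs
        _ = cs := mul_one cs
    have htri : ‖cd * charFun' μd t‖ - ‖ca * charFun' μa t‖
        - ‖cs * charFun' μs t‖ ≤ ‖f t‖ := by
      rw [hf t]
      have e1 := abs_sub_le_abs_add (cd * charFun' μd t + ca * charFun' μa t)
        (cs * charFun' μs t)
      have e2 := abs_sub_le_abs_add (cd * charFun' μd t) (ca * charFun' μa t)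
      linarith
    have hd : cd * m ≤ ‖cd * charFun' μd t‖ := by
      rw [h1]
      exact mul_le_mul_of_nonneg_left (hmd t) hcd.le
    rw [h2] at htri
    linarith
  -- eventually small
  have hsmall : ∀ᶠ t in cocompact ℝ, ca * ‖charFun' μa t‖ < ε := by
    have h0 := ((charFun'_tendsto_zero μa hac).norm).const_mul ca
    simp only [norm_zero, mul_zero] at h0
    exact h0.eventually_lt_const hεpos
  rw [Filter.hasBasis_cocompact.eventually_iff] at hsmall
  obtain ⟨K, hK, hKs⟩ := hsmall
  -- continuity of f
  have hfc : Continuous f := by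
    have : Continuous fun t => (cd : ℂ) * charFun' μd t + ca * charFun' μa t +
        cs * charFun' μs t := by
      exact ((continuous_const.mul (charFun'_continuous μd)).add
        (continuous_const.mul (charFun'_continuous μa))).add
        (continuous_const.mul (charFun'_continuous μs))
    exact this.congr fun t => (hf t).symm
  have hout : ∀ t ∉ K, ε ≤ ‖f t‖ := by
    intro t ht
    have := hlow t
    have : cd * m - cs - ca * ‖charFun' μa t‖ ≤ ‖f t‖ := hlow t
    have h2 : ca * ‖charFun' μa t‖ < ε := hKs ht
    have : cd * m - cs = 2 * ε := by rw [hε]; ring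
    linarith
  by_cases hKe : K.Nonempty
  · obtain ⟨t0, ht0K, ht0min⟩ := hK.exists_isMinOn hKe
      ((continuous_norm.comp hfc).continuousOn)
    refine ⟨min ε (‖f t0‖), lt_min hεpos ?_, ?_⟩
    · exact (norm_pos_iff.mpr (hnz t0))
    · intro t
      by_cases htK : t ∈ K
      · exact le_trans (min_le_right _ _) (ht0min htK)
      · exact le_trans (min_le_left _ _) (hout t htK)
  · refine ⟨ε, hεpos, fun t => hout t fun h => hKe ⟨t, h⟩⟩
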